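/- Extending the horizon backward with a zero initial state does not increase the minimal cost: for any disturbances w₀, …, w_T ∈ ℝⁿ, the minimum over u ∈ ℝ^{(T+1)m} of J_{T+1}(u, col(0, w₀, …, w_T)) is less than or equal to the minimum over u ∈ ℝ^{Tm} of J_T(u, col(w₀, w₁, …, w_T)), i.e., the minimal (T+1)-horizon cost starting at x₀ = 0 with disturbances (w₀, …, w_T) is at most the minimal T-horizon cost starting at x₀ = w₀ with disturbances (w₁, …, w_T). (Inequality (22) in the proof of Lemma 2.) -/

import Mathlib

open Matrix

noncomputable section

/-- Index type for stacked state / disturbance trajectories over horizon `T`: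
block index in `Fin (T+1)`, coordinate in `Fin n`. -/
abbrev SIdx (n T : ℕ) := Fin (T + 1) × Fin n

/-- Index type for stacked input trajectories over horizon `T`. -/
abbrev UIdx (m T : ℕ) := Fin T × Fin m

/-- The block-downshift operator `𝐙`. -/
def Zshift (n T : ℕ) : Matrix (SIdx n T) (SIdx n T) ℝ :=
  Matrix.of fun p q => if (p.1 : ℕ) = (q.1 : ℕ) + 1 ∧ p.2 = q.2 then (1 : ℝ) else 0

/-- `𝐀 = I_{T+1} ⊗ A`. -/
def bigA (n T : ℕ) (A : Matrix (Fin n) (Fin n) ℝ) : Matrix (SIdx n T) (SIdx n T) ℝ :=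
  Matrix.of fun p q => if p.1 = q.1 then A p.2 q.2 else 0

/-- `𝐁 = col(I_T ⊗ B, 0)`. -/
def bigB (n m T : ℕ) (B : Matrix (Fin n) (Fin m) ℝ) : Matrix (SIdx n T) (UIdx m T) ℝ :=
  Matrix.of fun p q => if (p.1 : ℕ) = (q.1 : ℕ) then B p.2 q.2 else 0

/-- `𝐐 = blkdiag(I_T ⊗ Q, 0)`. -/
def bigQ (n T : ℕ) (Q : Matrix (Fin n) (Fin n) ℝ) : Matrix (SIdx n T) (SIdx n T) ℝ :=
  Matrix.of fun p q => if p.1 = q.1 ∧ (p.1 : ℕ) < T then Q p.2 q.2 else 0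

/-- `𝐑 = I_T ⊗ R`. -/
def bigR (m T : ℕ) (R : Matrix (Fin m) (Fin m) ℝ) : Matrix (UIdx m T) (UIdx m T) ℝ :=
  Matrix.of fun p q => if p.1 = q.1 then R p.2 q.2 else 0

/-- `𝐅 = (I − 𝐙𝐀)⁻¹𝐙𝐁`. -/
def bigF (n m T : ℕ) (A : Matrix (Fin n) (Fin n) ℝ) (B : Matrix (Fin n) (Fin m) ℝ) :
    Matrix (SIdx n T) (UIdx m T) ℝ :=
  (1 - Zshift n T * bigA n T A)⁻¹ * (Zshift n T * bigB n m T B)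

/-- `𝐆 = (I − 𝐙𝐀)⁻¹`. -/
def bigG (n T : ℕ) (A : Matrix (Fin n) (Fin n) ℝ) : Matrix (SIdx n T) (SIdx n T) ℝ :=
  (1 - Zshift n T * bigA n T A)⁻¹

/-- The control cost `J_T(u, δ) = xᵀ𝐐x + uᵀ𝐑u` with `x = 𝐅u + 𝐆δ`. -/
def costJ (n m T : ℕ) (A : Matrix (Fin n) (Fin n) ℝ) (B : Matrix (Fin n) (Fin m) ℝ)
    (Q : Matrix (Fin n) (Fin n) ℝ) (R : Matrix (Fin m) (Fin m) ℝ)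
    (u : UIdx m T → ℝ) (δ : SIdx n T → ℝ) : ℝ :=
  let x := bigF n m T A B *ᵥ u + bigG n T A *ᵥ δ
  x ⬝ᵥ (bigQ n T Q *ᵥ x) + u ⬝ᵥ (bigR m T R *ᵥ u)

/-- `𝐏 = 𝐑 + 𝐅ᵀ𝐐𝐅`. -/
def bigP (n m T : ℕ) (A : Matrix (Fin n) (Fin n) ℝ) (B : Matrix (Fin n) (Fin m) ℝ)
    (Q : Matrix (Fin n) (Fin n) ℝ) (R : Matrix (Fin m) (Fin m) ℝ) :
    Matrix (UIdx m T) (UIdx m T) ℝ :=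
  bigR m T R + (bigF n m T A B)ᵀ * bigQ n T Q * bigF n m T A B

/-- The clairvoyant cost matrix `𝐂_T = 𝐆ᵀ𝐐(I + 𝐅𝐑⁻¹𝐅ᵀ𝐐)⁻¹𝐆`. -/
def Cmat (n m T : ℕ) (A : Matrix (Fin n) (Fin n) ℝ) (B : Matrix (Fin n) (Fin m) ℝ)
    (Q : Matrix (Fin n) (Fin n) ℝ) (R : Matrix (Fin m) (Fin m) ℝ) :
    Matrix (SIdx n T) (SIdx n T) ℝ :=
  (bigG n T A)ᵀ * bigQ n T Q *
    (1 + bigF n m T A B * (bigR m T R)⁻¹ * (bigF n m T A B)ᵀ * bigQ n T Q)⁻¹ * bigG n T A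

/-- Assemble `δ = col(x₀, w₀, …, w_{T−1})`. -/
def assemble (n T : ℕ) (x0 : Fin n → ℝ) (w : Fin T × Fin n → ℝ) : SIdx n T → ℝ :=
  fun p => if h : (p.1 : ℕ) = 0 then x0 p.2
    else w (⟨(p.1 : ℕ) - 1, by have := p.1.isLt; omega⟩, p.2)

namespace StmtAux

variable {n m : ℕ}

/-- shift-embed a state trajectory by one block, with zero first block. -/
def eS (n T : ℕ) (v : SIdx n T → ℝ) : SIdx n (T + 1) → ℝ :=
  fun p => if h : (p.1 : ℕ) = 0 then 0
    else v (⟨(p.1 : ℕ) - 1, by have := p.1.isLt; omega⟩, p.2)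

/-- shift-embed an input trajectory by one block, with zero first block. -/
def eU (m T : ℕ) (u : UIdx m T → ℝ) : UIdx m (T + 1) → ℝ :=
  fun p => if h : (p.1 : ℕ) = 0 then 0
    else u (⟨(p.1 : ℕ) - 1, by have := p.1.isLt; omega⟩, p.2)

lemma eS_add {T : ℕ} (a b : SIdx n T → ℝ) : eS n T (a + b) = eS n T a + eS n T b := by
  funext p
  simp only [eS, Pi.add_apply]
  split <;> simp

lemma eS_sub {T : ℕ} (a b : SIdx n T → ℝ) : eS n T (a - b) = eS n T a - eS n T b := by
  funext p
  simp only [eS, Pi.sub_apply]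
  split <;> simp

lemma Zshift_mulVec {L : ℕ} (v : SIdx n L → ℝ) (p : SIdx n L) :
    (Zshift n L *ᵥ v) p = if h : (p.1 : ℕ) = 0 then 0
      else v (⟨(p.1 : ℕ) - 1, by have := p.1.isLt; omega⟩, p.2) := by
  rw [mulVec, dotProduct]
  split
  · rename_i h
    apply Finset.sum_eq_zero
    intro q _
    simp only [Zshift, of_apply]
    rw [if_neg]
    · ring
    · rintro ⟨h1, -⟩; omega
  · rename_i h
    rw [Finset.sum_eq_single (⟨⟨(p.1 : ℕ) - 1, by have := p.1.isLt; omega⟩, p.2⟩ : SIdx n L)]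
    · simp only [Zshift, of_apply]
      rw [if_pos]
      · ring
      · constructor
        · show (p.1 : ℕ) = (p.1 : ℕ) - 1 + 1
          omega
        · trivial
    · intro q _ hq
      simp only [Zshift, of_apply]
      rw [if_neg]
      · ring
      · rintro ⟨h1, h2⟩
        apply hq
        apply Prod.ext
        · ext; simp; omega
        · exact h2.symm
    · intro hmem; exact absurd (Finset.mem_univ _) hmem

lemma bigA_mulVec {L : ℕ} (A : Matrix (Fin n) (Fin n) ℝ) (v : SIdx n L → ℝ) (p : SIdx n L) :
    (bigA n L A *ᵥ v) p = ∑ b, A p.2 b * v (p.1, b) := by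
  rw [mulVec, dotProduct, Fintype.sum_prod_type]
  rw [Finset.sum_eq_single p.1]
  · apply Finset.sum_congr rfl; intro b _; simp [bigA]
  · intro j _ hj
    apply Finset.sum_eq_zero; intro b _
    simp only [bigA, of_apply]
    rw [if_neg (fun h => hj h.symm)]; ring
  · simp

lemma bigB_mulVec {L : ℕ} (B : Matrix (Fin n) (Fin m) ℝ) (u : UIdx m L → ℝ) (p : SIdx n L) :
    (bigB n m L B *ᵥ u) p = if h : (p.1 : ℕ) < L then ∑ b, B p.2 b * u (⟨(p.1 : ℕ), h⟩, b)
      else 0 := by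
  rw [mulVec, dotProduct, Fintype.sum_prod_type]
  split
  · rename_i h
    rw [Finset.sum_eq_single (⟨(p.1 : ℕ), h⟩ : Fin L)]
    · apply Finset.sum_congr rfl; intro b _; simp [bigB]
    · intro j _ hj
      apply Finset.sum_eq_zero; intro b _
      simp only [bigB, of_apply]
      rw [if_neg]
      · ring
      · intro hh; apply hj; ext; simpa using hh.symm
    · simp
  · rename_i h
    apply Finset.sum_eq_zero
    intro j _
    apply Finset.sum_eq_zero; intro b _
    simp only [bigB, of_apply]
    rw [if_neg]
    · ring
    · intro hh; exact h (hh ▸ j.isLt)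

lemma bigQ_mulVec {L : ℕ} (Q : Matrix (Fin n) (Fin n) ℝ) (v : SIdx n L → ℝ) (p : SIdx n L) :
    (bigQ n L Q *ᵥ v) p = if (p.1 : ℕ) < L then ∑ b, Q p.2 b * v (p.1, b) else 0 := by
  rw [mulVec, dotProduct, Fintype.sum_prod_type]
  split
  · rename_i h
    rw [Finset.sum_eq_single p.1]
    · apply Finset.sum_congr rfl; intro b _; simp [bigQ, h]
    · intro j _ hj
      apply Finset.sum_eq_zero; intro b _
      simp only [bigQ, of_apply]
      rw [if_neg]
      · ring
      · rintro ⟨h1, -⟩; exact hj h1.symm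
    · simp
  · rename_i h
    apply Finset.sum_eq_zero
    intro j _
    apply Finset.sum_eq_zero; intro b _
    simp only [bigQ, of_apply]
    rw [if_neg]
    · ring
    · rintro ⟨h1, h2⟩; exact h (h1 ▸ h2)

lemma bigR_mulVec {L : ℕ} (R : Matrix (Fin m) (Fin m) ℝ) (u : UIdx m L → ℝ) (p : UIdx m L) :
    (bigR m L R *ᵥ u) p = ∑ b, R p.2 b * u (p.1, b) := by
  rw [mulVec, dotProduct, Fintype.sum_prod_type]
  rw [Finset.sum_eq_single p.1]
  · apply Finset.sum_congr rfl; intro b _; simp [bigR]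
  · intro j _ hj
    apply Finset.sum_eq_zero; intro b _
    simp only [bigR, of_apply]
    rw [if_neg (fun h => hj h.symm)]; ring
  · simp



lemma Z_e {T : ℕ} (v : SIdx n T → ℝ) :
    Zshift n (T + 1) *ᵥ eS n T v = eS n T (Zshift n T *ᵥ v) := by
  funext p
  simp only [Zshift_mulVec, eS, Fin.val_mk]

lemma A_e {T : ℕ} (A : Matrix (Fin n) (Fin n) ℝ) (v : SIdx n T → ℝ) :
    bigA n (T + 1) A *ᵥ eS n T v = eS n T (bigA n T A *ᵥ v) := by
  funext p
  simp only [bigA_mulVec, eS, Fin.val_mk]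
  split_ifs with h0
  · simp
  · rfl

lemma B_e {T : ℕ} (B : Matrix (Fin n) (Fin m) ℝ) (u : UIdx m T → ℝ) :
    bigB n m (T + 1) B *ᵥ eU m T u = eS n T (bigB n m T B *ᵥ u) := by
  funext p
  simp only [bigB_mulVec, eS, eU, Fin.val_mk]
  split_ifs with h0 h1 h2 h3 <;> first | rfl | omega | simp

lemma pow_strictBlock_eq_zero {L : ℕ} (M : Matrix (SIdx n L) (SIdx n L) ℝ)
    (h : ∀ p q, M p q ≠ 0 → (q.1 : ℕ) < (p.1 : ℕ)) :
    M ^ (L + 1) = 0 := by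
  have key : ∀ k : ℕ, ∀ p q : SIdx n L, (p.1 : ℕ) < (q.1 : ℕ) + k → (M ^ k) p q = 0 := by
    intro k
    induction k with
    | zero =>
      intro p q hpq
      simp only [pow_zero]
      rw [Matrix.one_apply_ne]
      rintro rfl; omega
    | succ k ih =>
      intro p q hpq
      rw [pow_succ']
      show ∑ r, M p r * (M ^ k) r q = 0
      apply Finset.sum_eq_zero
      intro r _
      by_cases hr : M p r = 0
      · rw [hr]; ring
      · rw [ih r q (by have := h p r hr; omega)]; ring
  ext p q
  rw [key (L + 1) p q (by have := p.1.isLt; omega)]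
  simp

lemma isUnit_one_sub_ZA {L : ℕ} (A : Matrix (Fin n) (Fin n) ℝ) :
    IsUnit (1 - Zshift n L * bigA n L A) := by
  have hnil : IsNilpotent (Zshift n L * bigA n L A) := by
    refine ⟨L + 1, pow_strictBlock_eq_zero _ ?_⟩
    intro p q hpq
    by_contra hle
    apply hpq
    show ∑ r, Zshift n L p r * bigA n L A r q = 0
    apply Finset.sum_eq_zero
    intro r _
    simp only [Zshift, bigA, of_apply]
    by_cases h1 : (p.1 : ℕ) = (r.1 : ℕ) + 1 ∧ p.2 = r.2
    · rw [if_pos h1]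
      rw [if_neg]
      · ring
      · intro h2
        have h3 : (r.1 : ℕ) = (q.1 : ℕ) := congrArg (fun x => (x.val : ℕ)) h2
        omega
    · rw [if_neg h1]; ring
  exact hnil.isUnit_one_sub

lemma mul_bigG {L : ℕ} (A : Matrix (Fin n) (Fin n) ℝ) :
    (1 - Zshift n L * bigA n L A) * bigG n L A = 1 := by
  exact Matrix.mul_nonsing_inv _ ((Matrix.isUnit_iff_isUnit_det _).mp (isUnit_one_sub_ZA A))

lemma bigG_mul {L : ℕ} (A : Matrix (Fin n) (Fin n) ℝ) :
    bigG n L A * (1 - Zshift n L * bigA n L A) = 1 := by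
  exact Matrix.nonsing_inv_mul _ ((Matrix.isUnit_iff_isUnit_det _).mp (isUnit_one_sub_ZA A))

lemma G_e {T : ℕ} (A : Matrix (Fin n) (Fin n) ℝ) (v : SIdx n T → ℝ) :
    bigG n (T + 1) A *ᵥ eS n T v = eS n T (bigG n T A *ᵥ v) := by
  set y := bigG n T A *ᵥ v with hy
  have h1 : (1 - Zshift n T * bigA n T A) *ᵥ y = v := by
    rw [Matrix.mulVec_mulVec, mul_bigG, Matrix.one_mulVec]
  have h2 : (1 - Zshift n (T + 1) * bigA n (T + 1) A) *ᵥ eS n T y = eS n T v := by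
    rw [Matrix.sub_mulVec, Matrix.one_mulVec, ← Matrix.mulVec_mulVec, A_e, Z_e, ← eS_sub]
    congr 1
    rw [← h1, Matrix.sub_mulVec, Matrix.one_mulVec, ← Matrix.mulVec_mulVec]
  calc bigG n (T + 1) A *ᵥ eS n T v
      = bigG n (T + 1) A *ᵥ ((1 - Zshift n (T + 1) * bigA n (T + 1) A) *ᵥ eS n T y) := by
        rw [h2]
    _ = (bigG n (T + 1) A * (1 - Zshift n (T + 1) * bigA n (T + 1) A)) *ᵥ eS n T y := by
        rw [Matrix.mulVec_mulVec]
    _ = eS n T y := by rw [bigG_mul, Matrix.one_mulVec]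

lemma F_e {T : ℕ} (A : Matrix (Fin n) (Fin n) ℝ) (B : Matrix (Fin n) (Fin m) ℝ)
    (u : UIdx m T → ℝ) :
    bigF n m (T + 1) A B *ᵥ eU m T u = eS n T (bigF n m T A B *ᵥ u) := by
  show ((1 - Zshift n (T+1) * bigA n (T+1) A)⁻¹ * (Zshift n (T+1) * bigB n m (T+1) B)) *ᵥ eU m T u
      = eS n T (bigF n m T A B *ᵥ u)
  rw [← Matrix.mulVec_mulVec, ← Matrix.mulVec_mulVec, B_e, Z_e]
  have hG : (1 - Zshift n (T+1) * bigA n (T+1) A)⁻¹ = bigG n (T+1) A := rfl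
  rw [hG, G_e]
  congr 1
  rw [bigF, ← Matrix.mulVec_mulVec, ← Matrix.mulVec_mulVec]
  rfl

lemma eS_succ {T : ℕ} (a : SIdx n T → ℝ) (j : Fin (T + 1)) (b : Fin n) :
    eS n T a (j.succ, b) = a (j, b) := by
  simp only [eS]
  rw [dif_neg (by simp : ¬((j.succ : Fin (T + 2)) : ℕ) = 0)]
  congr 1

lemma eU_succ {T : ℕ} (a : UIdx m T → ℝ) (j : Fin T) (b : Fin m) :
    eU m T a (j.succ, b) = a (j, b) := by
  simp only [eU]
  rw [dif_neg (by simp : ¬((j.succ : Fin (T + 1)) : ℕ) = 0)]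
  congr 1

lemma dot_eS {T : ℕ} (a : SIdx n T → ℝ) (z : SIdx n (T + 1) → ℝ) :
    eS n T a ⬝ᵥ z = a ⬝ᵥ (fun q => z (q.1.succ, q.2)) := by
  rw [dotProduct, dotProduct, Fintype.sum_prod_type, Fintype.sum_prod_type, Fin.sum_univ_succ]
  have h0 : (∑ b, eS n T a ((0 : Fin (T + 2)), b) * z ((0 : Fin (T + 2)), b)) = 0 := by
    apply Finset.sum_eq_zero; intro b _
    simp [eS]
  rw [h0, zero_add]
  apply Finset.sum_congr rfl; intro j _
  apply Finset.sum_congr rfl; intro b _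
  rw [eS_succ]

lemma dot_eU {T : ℕ} (a : UIdx m T → ℝ) (z : UIdx m (T + 1) → ℝ) :
    eU m T a ⬝ᵥ z = a ⬝ᵥ (fun q => z (q.1.succ, q.2)) := by
  rw [dotProduct, dotProduct, Fintype.sum_prod_type, Fintype.sum_prod_type, Fin.sum_univ_succ]
  have h0 : (∑ b, eU m T a ((0 : Fin (T + 1)), b) * z ((0 : Fin (T + 1)), b)) = 0 := by
    apply Finset.sum_eq_zero; intro b _
    simp [eU]
  rw [h0, zero_add]
  apply Finset.sum_congr rfl; intro j _
  apply Finset.sum_congr rfl; intro b _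
  rw [eU_succ]

lemma Q_e_restrict {T : ℕ} (Q : Matrix (Fin n) (Fin n) ℝ) (c : SIdx n T → ℝ) :
    (fun q : SIdx n T => (bigQ n (T + 1) Q *ᵥ eS n T c) (q.1.succ, q.2))
      = bigQ n T Q *ᵥ c := by
  funext q
  rw [bigQ_mulVec, bigQ_mulVec]
  simp only [Fin.val_succ]
  by_cases h : (q.1 : ℕ) < T
  · rw [if_pos (by omega : (q.1 : ℕ) + 1 < T + 1), if_pos h]
    apply Finset.sum_congr rfl; intro b _
    rw [eS_succ]
  · rw [if_neg (by omega : ¬ (q.1 : ℕ) + 1 < T + 1), if_neg h]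

lemma R_e_restrict {T : ℕ} (R : Matrix (Fin m) (Fin m) ℝ) (u : UIdx m T → ℝ) :
    (fun q : UIdx m T => (bigR m (T + 1) R *ᵥ eU m T u) (q.1.succ, q.2))
      = bigR m T R *ᵥ u := by
  funext q
  rw [bigR_mulVec, bigR_mulVec]
  apply Finset.sum_congr rfl; intro b _
  rw [eU_succ]

lemma costJ_shift {T : ℕ} (A : Matrix (Fin n) (Fin n) ℝ) (B : Matrix (Fin n) (Fin m) ℝ)
    (Q : Matrix (Fin n) (Fin n) ℝ) (R : Matrix (Fin m) (Fin m) ℝ)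
    (u : UIdx m T → ℝ) (δ : SIdx n T → ℝ) :
    costJ n m (T + 1) A B Q R (eU m T u) (eS n T δ) = costJ n m T A B Q R u δ := by
  unfold costJ
  dsimp only
  have hx : bigF n m (T + 1) A B *ᵥ eU m T u + bigG n (T + 1) A *ᵥ eS n T δ
      = eS n T (bigF n m T A B *ᵥ u + bigG n T A *ᵥ δ) := by
    rw [F_e, G_e, eS_add]
  rw [hx, dot_eS, Q_e_restrict, dot_eU, R_e_restrict]

lemma quadQ_nonneg {L : ℕ} (Q : Matrix (Fin n) (Fin n) ℝ) (hQ : Q.PosSemidef)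
    (v : SIdx n L → ℝ) : 0 ≤ v ⬝ᵥ (bigQ n L Q *ᵥ v) := by
  rw [dotProduct, Fintype.sum_prod_type]
  apply Finset.sum_nonneg; intro i _
  by_cases h : (i : ℕ) < L
  · have heq : ∑ b, v (i, b) * (bigQ n L Q *ᵥ v) (i, b)
        = (fun b => v (i, b)) ⬝ᵥ (Q *ᵥ fun b => v (i, b)) := by
      apply Finset.sum_congr rfl; intro b _
      rw [bigQ_mulVec, if_pos h]
      rfl
    rw [heq]
    have := hQ.dotProduct_mulVec_nonneg (fun b => v (i, b))
    simpa using this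
  · apply le_of_eq; symm
    apply Finset.sum_eq_zero; intro b _
    rw [bigQ_mulVec, if_neg h]
    ring

lemma quadR_nonneg {L : ℕ} (R : Matrix (Fin m) (Fin m) ℝ) (hR : R.PosSemidef)
    (u : UIdx m L → ℝ) : 0 ≤ u ⬝ᵥ (bigR m L R *ᵥ u) := by
  rw [dotProduct, Fintype.sum_prod_type]
  apply Finset.sum_nonneg; intro i _
  have heq : ∑ b, u (i, b) * (bigR m L R *ᵥ u) (i, b)
      = (fun b => u (i, b)) ⬝ᵥ (R *ᵥ fun b => u (i, b)) := by
    apply Finset.sum_congr rfl; intro b _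
    rw [bigR_mulVec]
    rfl
  rw [heq]
  have := hR.dotProduct_mulVec_nonneg (fun b => u (i, b))
  simpa using this

lemma costJ_nonneg {L : ℕ} (A : Matrix (Fin n) (Fin n) ℝ) (B : Matrix (Fin n) (Fin m) ℝ)
    (Q : Matrix (Fin n) (Fin n) ℝ) (R : Matrix (Fin m) (Fin m) ℝ)
    (hQ : Q.PosSemidef) (hR : R.PosSemidef)
    (u : UIdx m L → ℝ) (δ : SIdx n L → ℝ) :
    0 ≤ costJ n m L A B Q R u δ := by
  unfold costJ
  exact add_nonneg (quadQ_nonneg Q hQ _) (quadR_nonneg R hR u)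

lemma assemble_shift {T : ℕ} (w : Fin (T + 1) × Fin n → ℝ) :
    assemble n (T + 1) 0 w
      = eS n T (assemble n T (fun p => w (0, p)) (fun q => w (q.1.succ, q.2))) := by
  funext p
  simp only [assemble, eS, Fin.val_mk]
  by_cases h0 : (p.1 : ℕ) = 0
  · rw [dif_pos h0, dif_pos h0]
    simp
  · rw [dif_neg h0, dif_neg h0]
    by_cases h1 : (p.1 : ℕ) - 1 = 0
    · rw [dif_pos h1]
      congr 1
      apply Prod.ext
      · ext; simpa using h1
      · rfl
    · rw [dif_neg h1]
      congr 1
      apply Prod.ext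
      · ext; simp [Fin.val_succ]; omega
      · rfl

end StmtAux

open StmtAux in
/-- Inequality (22) in the proof of Lemma 2: extending the horizon backward with a zero
initial state does not increase the minimal cost. -/
theorem stmt10 (n m T : ℕ) (hn : 0 < n) (hm : 0 < m) (hT : 1 ≤ T)
    (A : Matrix (Fin n) (Fin n) ℝ) (B : Matrix (Fin n) (Fin m) ℝ)
    (Q : Matrix (Fin n) (Fin n) ℝ) (R : Matrix (Fin m) (Fin m) ℝ)
    (hQ : Q.PosSemidef) (hR : R.PosDef)
    (w : Fin (T + 1) × Fin n → ℝ) :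
    (⨅ u : UIdx m (T + 1) → ℝ,
        costJ n m (T + 1) A B Q R u (assemble n (T + 1) 0 w)) ≤
      ⨅ u : UIdx m T → ℝ,
        costJ n m T A B Q R u
          (assemble n T (fun p => w (0, p)) (fun q => w (q.1.succ, q.2))) := by
  have hbdd : BddBelow (Set.range fun u : UIdx m (T + 1) → ℝ =>
      costJ n m (T + 1) A B Q R u (assemble n (T + 1) 0 w)) := by
    refine ⟨0, ?_⟩
    rintro y ⟨u, rfl⟩
    exact costJ_nonneg A B Q R hQ hR.posSemidef u _
  apply le_ciInf
  intro u
  have key : costJ n m (T + 1) A B Q R (eU m T u) (assemble n (T + 1) 0 w)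
      = costJ n m T A B Q R u
          (assemble n T (fun p => w (0, p)) (fun q => w (q.1.succ, q.2))) := by
    rw [assemble_shift, costJ_shift]
  calc (⨅ u : UIdx m (T + 1) → ℝ,
        costJ n m (T + 1) A B Q R u (assemble n (T + 1) 0 w))
      ≤ costJ n m (T + 1) A B Q R (eU m T u) (assemble n (T + 1) 0 w) := ciInf_le hbdd _
    _ = _ := key
end
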